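/- With f and f* as in the counterexample, the joint survival functions satisfy P(X_1≥z_1, X_2≥z_2, Y_1≥z_3, Y_2≥z_4) ≤ P(X*_1≥z_1, X*_2≥z_2, Y*_1≥z_3, Y*_2≥z_4) for all z ∈ ℝ⁴. -/

import Mathlib

open MeasureTheory Set ENNReal

noncomputable def ind (P : Prop) : ℝ := by classical exact if P then 1 else 0

noncomputable def fdens (x₁ x₂ y₁ y₂ : ℝ) : ℝ :=
  ind (0 ≤ x₁ ∧ x₁ ≤ x₂ ∧ x₂ ≤ 1) * ind (1 < y₁ ∧ y₁ ≤ y₂ ∧ y₂ ≤ 2) +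
  ind (0 ≤ x₂ ∧ x₂ < x₁ ∧ x₁ ≤ 1) * ind (1 < y₂ ∧ y₂ < y₁ ∧ y₁ ≤ 2) +
  ind (1 < x₁ ∧ x₁ ≤ x₂ ∧ x₂ ≤ 2) * ind (0 ≤ y₁ ∧ y₁ ≤ y₂ ∧ y₂ ≤ 1) +
  ind (1 < x₂ ∧ x₂ < x₁ ∧ x₁ ≤ 2) * ind (0 ≤ y₂ ∧ y₂ < y₁ ∧ y₁ ≤ 1)

noncomputable def fstar (x₁ x₂ y₁ y₂ : ℝ) : ℝ :=
  ind (0 ≤ x₁ ∧ x₁ ≤ x₂ ∧ x₂ ≤ 1) * ind (0 ≤ y₂ ∧ y₂ < y₁ ∧ y₁ ≤ 1) +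
  ind (0 ≤ x₂ ∧ x₂ < x₁ ∧ x₁ ≤ 1) * ind (1 < y₂ ∧ y₂ < y₁ ∧ y₁ ≤ 2) +
  ind (1 < x₁ ∧ x₁ ≤ x₂ ∧ x₂ ≤ 2) * ind (0 ≤ y₁ ∧ y₁ ≤ y₂ ∧ y₂ ≤ 1) +
  ind (1 < x₂ ∧ x₂ < x₁ ∧ x₁ ≤ 2) * ind (1 < y₁ ∧ y₁ ≤ y₂ ∧ y₂ ≤ 2)

/-! ### Auxiliary 2D sets -/

def SA : Set (ℝ × ℝ) := {q | 0 ≤ q.1 ∧ q.1 ≤ q.2 ∧ q.2 ≤ 1}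
def SB : Set (ℝ × ℝ) := {q | 0 ≤ q.2 ∧ q.2 < q.1 ∧ q.1 ≤ 1}
def SB' : Set (ℝ × ℝ) := {q | 0 ≤ q.2 ∧ q.2 ≤ q.1 ∧ q.1 ≤ 1}
def SC : Set (ℝ × ℝ) := {q | 1 < q.1 ∧ q.1 ≤ q.2 ∧ q.2 ≤ 2}
def SD : Set (ℝ × ℝ) := {q | 1 < q.2 ∧ q.2 < q.1 ∧ q.1 ≤ 2}
def Qd (w₁ w₂ : ℝ) : Set (ℝ × ℝ) := {q | w₁ ≤ q.1 ∧ w₂ ≤ q.2}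

lemma meas_TA : MeasurableSet SA := by
  unfold SA
  exact (measurableSet_le measurable_const measurable_fst).inter
    ((measurableSet_le measurable_fst measurable_snd).inter
      (measurableSet_le measurable_snd measurable_const))

lemma meas_TB : MeasurableSet SB := by
  unfold SB
  exact (measurableSet_le measurable_const measurable_snd).inter
    ((measurableSet_lt measurable_snd measurable_fst).inter
      (measurableSet_le measurable_fst measurable_const))

lemma meas_TB' : MeasurableSet SB' := by
  unfold SB'
  exact (measurableSet_le measurable_const measurable_snd).inter
    ((measurableSet_le measurable_snd measurable_fst).inter
      (measurableSet_le measurable_fst measurable_const))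

lemma meas_TC : MeasurableSet SC := by
  unfold SC
  exact (measurableSet_lt measurable_const measurable_fst).inter
    ((measurableSet_le measurable_fst measurable_snd).inter
      (measurableSet_le measurable_snd measurable_const))

lemma meas_TD : MeasurableSet SD := by
  unfold SD
  exact (measurableSet_lt measurable_const measurable_snd).inter
    ((measurableSet_lt measurable_snd measurable_fst).inter
      (measurableSet_le measurable_fst measurable_const))

lemma meas_Qd (w₁ w₂ : ℝ) : MeasurableSet (Qd w₁ w₂) := by
  unfold Qd
  exact (measurableSet_le measurable_const measurable_fst).inter
    (measurableSet_le measurable_const measurable_snd)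

/-! ### Slicing -/

lemma vol_slice (s : Set (ℝ × ℝ)) (hs : MeasurableSet s) (I : Set ℝ) (hI : MeasurableSet I)
    (g : ℝ → ℝ)
    (hslice : ∀ x : ℝ, volume (Prod.mk x ⁻¹' s) = I.indicator (fun x => ENNReal.ofReal (g x)) x) :
    volume s = ∫⁻ x in I, ENNReal.ofReal (g x) := by
  rw [show (volume : Measure (ℝ × ℝ)) = (volume : Measure ℝ).prod volume from rfl,
    Measure.prod_apply hs]
  simp_rw [hslice]
  exact lintegral_indicator hI _

lemma lint_lin_Ioc (a b c d : ℝ) (hab : a ≤ b) (h : ∀ x ∈ Icc a b, 0 ≤ c * x + d) :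
    ∫⁻ x in Ioc a b, ENNReal.ofReal (c * x + d) = ENNReal.ofReal (∫ x in a..b, (c * x + d)) := by
  rw [← ofReal_integral_eq_lintegral_ofReal, intervalIntegral.integral_of_le hab]
  · exact ((continuous_const.mul continuous_id).add continuous_const).integrableOn_Icc.mono_set
      Ioc_subset_Icc_self
  · filter_upwards [ae_restrict_mem measurableSet_Ioc] with x hx
    simpa using h x (Ioc_subset_Icc_self hx)

lemma lint_lin_Icc (a b c d : ℝ) (hab : a ≤ b) (h : ∀ x ∈ Icc a b, 0 ≤ c * x + d) :
    ∫⁻ x in Icc a b, ENNReal.ofReal (c * x + d) = ENNReal.ofReal (∫ x in a..b, (c * x + d)) := by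
  rw [← setLIntegral_congr Ioc_ae_eq_Icc]
  exact lint_lin_Ioc a b c d hab h

lemma int_lin (a b c d : ℝ) :
    ∫ x in a..b, (c * x + d) = c * (b ^ 2 - a ^ 2) / 2 + d * (b - a) := by
  rw [intervalIntegral.integral_add ((intervalIntegral.intervalIntegrable_id
      (μ := volume)).const_mul c) intervalIntegrable_const,
    intervalIntegral.integral_const_mul, integral_id, intervalIntegral.integral_const]
  simp [smul_eq_mul]; ring

lemma vol_TA : volume SA = ENNReal.ofReal (1 / 2) := by
  rw [vol_slice SA meas_TA (Icc 0 1) measurableSet_Icc (fun x => (-1) * x + 1) ?_,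
    lint_lin_Icc 0 1 (-1) 1 (by norm_num) (by intro x hx; simp at hx ⊢; linarith [hx.2]),
    int_lin]
  · norm_num
  intro x
  by_cases hx : 0 ≤ x
  · have h1 : Prod.mk x ⁻¹' SA = Icc x 1 := by
      ext y; simp [SA, hx, Icc]
    rw [h1, Real.volume_Icc]
    by_cases h2 : x ≤ 1
    · have hmem : x ∈ Icc (0:ℝ) 1 := ⟨hx, h2⟩
      rw [indicator_of_mem hmem]
      ring_nf
    · have hmem : x ∉ Icc (0:ℝ) 1 := fun h => h2 h.2
      rw [indicator_of_notMem hmem, ENNReal.ofReal_eq_zero]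
      linarith
  · have h1 : Prod.mk x ⁻¹' SA = ∅ := by
      ext y; simp [SA]; intro h; exact absurd h hx
    have hmem : x ∉ Icc (0:ℝ) 1 := fun h => hx h.1
    rw [h1, measure_empty, indicator_of_notMem hmem]

lemma vol_TB' : volume SB' = ENNReal.ofReal (1 / 2) := by
  rw [vol_slice SB' meas_TB' (Icc 0 1) measurableSet_Icc (fun x => 1 * x + 0) ?_,
    lint_lin_Icc 0 1 1 0 (by norm_num) (by intro x hx; simp at hx ⊢; linarith [hx.1]),
    int_lin]
  · norm_num
  intro x
  by_cases hx : x ≤ 1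
  · have h1 : Prod.mk x ⁻¹' SB' = Icc 0 x := by
      ext y; simp [SB', hx, Icc]
    rw [h1, Real.volume_Icc]
    by_cases h2 : 0 ≤ x
    · have hmem : x ∈ Icc (0:ℝ) 1 := ⟨h2, hx⟩
      rw [indicator_of_mem hmem]
      norm_num
    · have hmem : x ∉ Icc (0:ℝ) 1 := fun h => h2 h.1
      rw [indicator_of_notMem hmem, ENNReal.ofReal_eq_zero]
      linarith [le_of_not_ge h2]
  · have h1 : Prod.mk x ⁻¹' SB' = ∅ := by
      ext y; simp [SB']; intro _ h; linarith
    have hmem : x ∉ Icc (0:ℝ) 1 := fun h => hx h.2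
    rw [h1, measure_empty, indicator_of_notMem hmem]

lemma vol_TC : volume SC = ENNReal.ofReal (1 / 2) := by
  rw [vol_slice SC meas_TC (Ioc 1 2) measurableSet_Ioc (fun x => (-1) * x + 2) ?_,
    lint_lin_Ioc 1 2 (-1) 2 (by norm_num) (by intro x hx; simp at hx ⊢; linarith [hx.2]),
    int_lin]
  · norm_num
  intro x
  by_cases hx : 1 < x
  · have h1 : Prod.mk x ⁻¹' SC = Icc x 2 := by
      ext y; simp [SC, hx, Icc]
    rw [h1, Real.volume_Icc]
    by_cases h2 : x ≤ 2
    · have hmem : x ∈ Ioc (1:ℝ) 2 := ⟨hx, h2⟩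
      rw [indicator_of_mem hmem]
      ring_nf
    · have hmem : x ∉ Ioc (1:ℝ) 2 := fun h => h2 h.2
      rw [indicator_of_notMem hmem, ENNReal.ofReal_eq_zero]
      linarith
  · have h1 : Prod.mk x ⁻¹' SC = ∅ := by
      ext y; simp [SC]; intro h; exact absurd h hx
    have hmem : x ∉ Ioc (1:ℝ) 2 := fun h => hx h.1
    rw [h1, measure_empty, indicator_of_notMem hmem]

lemma vol_TD : volume SD = ENNReal.ofReal (1 / 2) := by
  rw [vol_slice SD meas_TD (Ioc 1 2) measurableSet_Ioc (fun x => 1 * x + (-1)) ?_,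
    lint_lin_Ioc 1 2 1 (-1) (by norm_num) (by intro x hx; simp at hx ⊢; linarith [hx.1]),
    int_lin]
  · norm_num
  intro x
  by_cases hx : x ≤ 2
  · have h1 : Prod.mk x ⁻¹' SD = Ioo 1 x := by
      ext y; simp [SD, hx, Ioo]
    rw [h1, Real.volume_Ioo]
    by_cases h2 : 1 < x
    · have hmem : x ∈ Ioc (1:ℝ) 2 := ⟨h2, hx⟩
      rw [indicator_of_mem hmem]
      ring_nf
    · have hmem : x ∉ Ioc (1:ℝ) 2 := fun h => h2 h.1
      rw [indicator_of_notMem hmem, ENNReal.ofReal_eq_zero]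
      linarith [le_of_not_gt h2]
  · have h1 : Prod.mk x ⁻¹' SD = ∅ := by
      ext y; simp [SD]; intro _ h; linarith
    have hmem : x ∉ Ioc (1:ℝ) 2 := fun h => hx h.2
    rw [h1, measure_empty, indicator_of_notMem hmem]

/-! ### The product structure of 4D volumes -/

def R4 (s t : Set (ℝ × ℝ)) : Set (ℝ × ℝ × ℝ × ℝ) :=
  {p | (p.1, p.2.1) ∈ s ∧ (p.2.2.1, p.2.2.2) ∈ t}

lemma meas_R4 {s t : Set (ℝ × ℝ)} (hs : MeasurableSet s) (ht : MeasurableSet t) :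
    MeasurableSet (R4 s t) := by
  have h1 : MeasurableSet ((fun p : ℝ × ℝ × ℝ × ℝ => (p.1, p.2.1)) ⁻¹' s) :=
    (measurable_fst.prodMk (measurable_fst.comp measurable_snd)) hs
  have h2 : MeasurableSet ((fun p : ℝ × ℝ × ℝ × ℝ => (p.2.2.1, p.2.2.2)) ⁻¹' t) :=
    ((measurable_fst.comp (measurable_snd.comp measurable_snd)).prodMk
      (measurable_snd.comp (measurable_snd.comp measurable_snd))) ht
  exact h1.inter h2

lemma volume_R4 (s t : Set (ℝ × ℝ)) (hs : MeasurableSet s) (ht : MeasurableSet t) :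
    volume (R4 s t) = volume s * volume t := by
  have h := MeasureTheory.volume_preserving_prodAssoc (α₁ := ℝ) (β₁ := ℝ) (γ₁ := ℝ × ℝ)
  have h2 : R4 s t =
      (MeasurableEquiv.prodAssoc : (ℝ × ℝ) × ℝ × ℝ ≃ᵐ ℝ × ℝ × ℝ × ℝ).symm ⁻¹' (s ×ˢ t) := by
    ext p; exact Iff.rfl
  rw [h2, (h.symm _).measure_preimage ((hs.prod ht).nullMeasurableSet)]
  rw [show (volume : Measure ((ℝ × ℝ) × ℝ × ℝ)) = (volume : Measure (ℝ × ℝ)).prod volume from rfl]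
  exact Measure.prod_prod s t

/-! ### Indicator decomposition -/

lemma ind_nonneg (P : Prop) : 0 ≤ ind P := by
  unfold ind; split_ifs <;> norm_num

lemma ofReal_ind_mul (P Q : Prop) :
    ENNReal.ofReal (ind P * ind Q) = ENNReal.ofReal (ind (P ∧ Q)) := by
  by_cases hP : P <;> by_cases hQ : Q <;> simp [ind, hP, hQ]

lemma ofReal_ind_mem {α : Type*} (s : Set α) (p : α) :
    ENNReal.ofReal (ind (p ∈ s)) = s.indicator 1 p := by
  by_cases h : p ∈ s <;> simp [ind, h]

lemma key_ineq (a b : ℝ≥0∞) (ha : a ≤ ENNReal.ofReal (1 / 2)) (hb : b ≤ ENNReal.ofReal (1 / 2)) :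
    a * ENNReal.ofReal (1 / 2) + ENNReal.ofReal (1 / 2) * b ≤
      a * b + ENNReal.ofReal (1 / 2) * ENNReal.ofReal (1 / 2) := by
  have haT : a ≠ ⊤ := (ha.trans_lt ENNReal.ofReal_lt_top).ne
  have hbT : b ≠ ⊤ := (hb.trans_lt ENNReal.ofReal_lt_top).ne
  have ha' : a.toReal ≤ 1 / 2 := ENNReal.toReal_le_of_le_ofReal (by norm_num) ha
  have hb' : b.toReal ≤ 1 / 2 := ENNReal.toReal_le_of_le_ofReal (by norm_num) hb
  have ha0 : (0:ℝ) ≤ a.toReal := ENNReal.toReal_nonneg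
  have hb0 : (0:ℝ) ≤ b.toReal := ENNReal.toReal_nonneg
  calc a * ENNReal.ofReal (1 / 2) + ENNReal.ofReal (1 / 2) * b
      = ENNReal.ofReal (a.toReal * (1 / 2) + (1 / 2) * b.toReal) := by
        rw [ENNReal.ofReal_add (by positivity) (by positivity), ENNReal.ofReal_mul ha0,
          ENNReal.ofReal_mul (by norm_num), ENNReal.ofReal_toReal haT, ENNReal.ofReal_toReal hbT]
    _ ≤ ENNReal.ofReal (a.toReal * b.toReal + (1 / 2) * (1 / 2)) :=
        ENNReal.ofReal_le_ofReal (by nlinarith)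
    _ = a * b + ENNReal.ofReal (1 / 2) * ENNReal.ofReal (1 / 2) := by
        rw [ENNReal.ofReal_add (by positivity) (by norm_num), ENNReal.ofReal_mul ha0,
          ENNReal.ofReal_mul (by norm_num), ENNReal.ofReal_toReal haT, ENNReal.ofReal_toReal hbT]

/-- The joint survival function of a vector with density `f` is pointwise dominated by that of
a vector with density `f*`. -/
theorem survival_le_survival_star {Ω : Type*} [MeasurableSpace Ω]
    (ℙ : Measure Ω) [IsProbabilityMeasure ℙ]
    (X₁ X₂ Y₁ Y₂ Xs₁ Xs₂ Ys₁ Ys₂ : Ω → ℝ)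
    (hV : Measurable fun ω => (X₁ ω, X₂ ω, Y₁ ω, Y₂ ω))
    (hW : Measurable fun ω => (Xs₁ ω, Xs₂ ω, Ys₁ ω, Ys₂ ω))
    (hlaw : Measure.map (fun ω => (X₁ ω, X₂ ω, Y₁ ω, Y₂ ω)) ℙ =
      volume.withDensity (fun p : ℝ × ℝ × ℝ × ℝ =>
        ENNReal.ofReal (fdens p.1 p.2.1 p.2.2.1 p.2.2.2)))
    (hlaws : Measure.map (fun ω => (Xs₁ ω, Xs₂ ω, Ys₁ ω, Ys₂ ω)) ℙ =
      volume.withDensity (fun p : ℝ × ℝ × ℝ × ℝ =>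
        ENNReal.ofReal (fstar p.1 p.2.1 p.2.2.1 p.2.2.2))) :
    ∀ z₁ z₂ z₃ z₄ : ℝ,
      ℙ {ω | z₁ ≤ X₁ ω ∧ z₂ ≤ X₂ ω ∧ z₃ ≤ Y₁ ω ∧ z₄ ≤ Y₂ ω} ≤
        ℙ {ω | z₁ ≤ Xs₁ ω ∧ z₂ ≤ Xs₂ ω ∧ z₃ ≤ Ys₁ ω ∧ z₄ ≤ Ys₂ ω} := by
  intro z₁ z₂ z₃ z₄
  set S : Set (ℝ × ℝ × ℝ × ℝ) := R4 (Qd z₁ z₂) (Qd z₃ z₄) with hSdef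
  have hS : MeasurableSet S := meas_R4 (meas_Qd z₁ z₂) (meas_Qd z₃ z₄)
  have hpre1 : {ω | z₁ ≤ X₁ ω ∧ z₂ ≤ X₂ ω ∧ z₃ ≤ Y₁ ω ∧ z₄ ≤ Y₂ ω}
      = (fun ω => (X₁ ω, X₂ ω, Y₁ ω, Y₂ ω)) ⁻¹' S := by
    ext ω; simp [hSdef, R4, Qd]; tauto
  have hpre2 : {ω | z₁ ≤ Xs₁ ω ∧ z₂ ≤ Xs₂ ω ∧ z₃ ≤ Ys₁ ω ∧ z₄ ≤ Ys₂ ω}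
      = (fun ω => (Xs₁ ω, Xs₂ ω, Ys₁ ω, Ys₂ ω)) ⁻¹' S := by
    ext ω; simp [hSdef, R4, Qd]; tauto
  rw [hpre1, hpre2, ← Measure.map_apply hV hS, ← Measure.map_apply hW hS, hlaw, hlaws,
    withDensity_apply _ hS, withDensity_apply _ hS]
  -- nonnegativity helper
  have h0 : ∀ P Q : Prop, 0 ≤ ind P * ind Q := fun P Q => mul_nonneg (ind_nonneg P) (ind_nonneg Q)
  -- pointwise decomposition
  have hfd : ∀ p : ℝ × ℝ × ℝ × ℝ, ENNReal.ofReal (fdens p.1 p.2.1 p.2.2.1 p.2.2.2)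
      = (R4 SA SC).indicator 1 p + (R4 SB SD).indicator 1 p
        + (R4 SC SA).indicator 1 p + (R4 SD SB).indicator 1 p := by
    intro p
    rw [fdens, ENNReal.ofReal_add (add_nonneg (add_nonneg (h0 _ _) (h0 _ _)) (h0 _ _)) (h0 _ _),
      ENNReal.ofReal_add (add_nonneg (h0 _ _) (h0 _ _)) (h0 _ _),
      ENNReal.ofReal_add (h0 _ _) (h0 _ _),
      ofReal_ind_mul, ofReal_ind_mul, ofReal_ind_mul, ofReal_ind_mul]
    congr 1
    · congr 1
      · congr 1
        · exact ofReal_ind_mem (R4 SA SC) p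
        · exact ofReal_ind_mem (R4 SB SD) p
      · exact ofReal_ind_mem (R4 SC SA) p
    · exact ofReal_ind_mem (R4 SD SB) p
  have hfs : ∀ p : ℝ × ℝ × ℝ × ℝ, ENNReal.ofReal (fstar p.1 p.2.1 p.2.2.1 p.2.2.2)
      = (R4 SA SB).indicator 1 p + (R4 SB SD).indicator 1 p
        + (R4 SC SA).indicator 1 p + (R4 SD SC).indicator 1 p := by
    intro p
    rw [fstar, ENNReal.ofReal_add (add_nonneg (add_nonneg (h0 _ _) (h0 _ _)) (h0 _ _)) (h0 _ _),
      ENNReal.ofReal_add (add_nonneg (h0 _ _) (h0 _ _)) (h0 _ _),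
      ENNReal.ofReal_add (h0 _ _) (h0 _ _),
      ofReal_ind_mul, ofReal_ind_mul, ofReal_ind_mul, ofReal_ind_mul]
    congr 1
    · congr 1
      · congr 1
        · exact ofReal_ind_mem (R4 SA SB) p
        · exact ofReal_ind_mem (R4 SB SD) p
      · exact ofReal_ind_mem (R4 SC SA) p
    · exact ofReal_ind_mem (R4 SD SC) p
  simp only [hfd, hfs]
  -- split the integrals and compute each piece
  have hint : ∀ (s t : Set (ℝ × ℝ)), MeasurableSet s → MeasurableSet t →
      ∫⁻ p in S, (R4 s t).indicator 1 p
        = volume (s ∩ Qd z₁ z₂) * volume (t ∩ Qd z₃ z₄) := by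
    intro s t hs ht
    rw [lintegral_indicator_one (meas_R4 hs ht), Measure.restrict_apply (meas_R4 hs ht)]
    have hR : R4 s t ∩ S = R4 (s ∩ Qd z₁ z₂) (t ∩ Qd z₃ z₄) := by
      ext p
      simp only [hSdef, R4, mem_inter_iff, mem_setOf_eq]
      tauto
    rw [hR, volume_R4 _ _ (hs.inter (meas_Qd z₁ z₂)) (ht.inter (meas_Qd z₃ z₄))]
  have mAC : Measurable ((R4 SA SC).indicator (1 : ℝ × ℝ × ℝ × ℝ → ℝ≥0∞)) :=
    measurable_one.indicator (meas_R4 meas_TA meas_TC)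
  have mBD : Measurable ((R4 SB SD).indicator (1 : ℝ × ℝ × ℝ × ℝ → ℝ≥0∞)) :=
    measurable_one.indicator (meas_R4 meas_TB meas_TD)
  have mCA : Measurable ((R4 SC SA).indicator (1 : ℝ × ℝ × ℝ × ℝ → ℝ≥0∞)) :=
    measurable_one.indicator (meas_R4 meas_TC meas_TA)
  have mAB : Measurable ((R4 SA SB).indicator (1 : ℝ × ℝ × ℝ × ℝ → ℝ≥0∞)) :=
    measurable_one.indicator (meas_R4 meas_TA meas_TB)
  erw [lintegral_add_left ((mAC.add mBD).add mCA), lintegral_add_left (mAC.add mBD),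
    lintegral_add_left mAC, lintegral_add_left ((mAB.add mBD).add mCA),
    lintegral_add_left (mAB.add mBD), lintegral_add_left mAB,
    hint SA SC meas_TA meas_TC, hint SB SD meas_TB meas_TD, hint SC SA meas_TC meas_TA,
    hint SD SB meas_TD meas_TB, hint SA SB meas_TA meas_TB, hint SD SC meas_TD meas_TC]
  -- notation for the eight 2D volumes
  set ax := volume (SA ∩ Qd z₁ z₂) with hax_def
  set dx := volume (SD ∩ Qd z₁ z₂) with hdx_def
  set bY := volume (SB ∩ Qd z₃ z₄) with hby_def
  set cy := volume (SC ∩ Qd z₃ z₄) with hcy_def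
  set m₁ := volume (SB ∩ Qd z₁ z₂) * volume (SD ∩ Qd z₃ z₄)
  set m₂ := volume (SC ∩ Qd z₁ z₂) * volume (SA ∩ Qd z₃ z₄)
  have key : ax * cy + dx * bY ≤ ax * bY + dx * cy := by
    have hax : ax ≤ ENNReal.ofReal (1 / 2) := by
      rw [hax_def, ← vol_TA]; exact measure_mono inter_subset_left
    have hby : bY ≤ ENNReal.ofReal (1 / 2) := by
      rw [hby_def, ← vol_TB']
      refine measure_mono (fun q hq => ?_)
      exact ⟨hq.1.1, hq.1.2.1.le, hq.1.2.2⟩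
    by_cases hx : z₁ ≤ 1 ∧ z₂ ≤ 1
    · have hdx : dx = ENNReal.ofReal (1 / 2) := by
        rw [hdx_def, show SD ∩ Qd z₁ z₂ = SD from ?_, vol_TD]
        ext q; constructor
        · exact fun h => h.1
        · rintro ⟨h1, h2, h3⟩
          exact ⟨⟨h1, h2, h3⟩, ⟨by linarith [hx.1], by linarith [hx.2]⟩⟩
      by_cases hy : z₃ ≤ 1 ∧ z₄ ≤ 1
      · have hcy : cy = ENNReal.ofReal (1 / 2) := by
          rw [hcy_def, show SC ∩ Qd z₃ z₄ = SC from ?_, vol_TC]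
          ext q; constructor
          · exact fun h => h.1
          · rintro ⟨h1, h2, h3⟩
            exact ⟨⟨h1, h2, h3⟩, ⟨by linarith [hy.1], by linarith [hy.2]⟩⟩
        rw [hdx, hcy]
        exact key_ineq ax bY hax hby
      · have hby0 : bY = 0 := by
          rw [hby_def, show SB ∩ Qd z₃ z₄ = ∅ from ?_, measure_empty]
          rcases not_and_or.mp hy with h | h <;> push_neg at h <;>
          · ext q
            simp only [mem_inter_iff, mem_empty_iff_false, iff_false, SB, Qd, mem_setOf_eq]
            rintro ⟨⟨h1, h2, h3⟩, h4, h5⟩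
            linarith
        rw [hby0, mul_zero, mul_zero, add_zero, zero_add]
        exact mul_le_mul_left (hax.trans hdx.ge) cy
    · have hax0 : ax = 0 := by
        rw [hax_def, show SA ∩ Qd z₁ z₂ = ∅ from ?_, measure_empty]
        rcases not_and_or.mp hx with h | h <;> push_neg at h <;>
        · ext q
          simp only [mem_inter_iff, mem_empty_iff_false, iff_false, SA, Qd, mem_setOf_eq]
          rintro ⟨⟨h1, h2, h3⟩, h4, h5⟩
          linarith
      rw [hax0, zero_mul, zero_mul, zero_add, zero_add]
      refine mul_le_mul_right ?_ dx
      by_cases hy : z₃ ≤ 1 ∧ z₄ ≤ 1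
      · have hcy : cy = ENNReal.ofReal (1 / 2) := by
          rw [hcy_def, show SC ∩ Qd z₃ z₄ = SC from ?_, vol_TC]
          ext q; constructor
          · exact fun h => h.1
          · rintro ⟨h1, h2, h3⟩
            exact ⟨⟨h1, h2, h3⟩, ⟨by linarith [hy.1], by linarith [hy.2]⟩⟩
        rw [hcy]; exact hby
      · have hby0 : bY = 0 := by
          rw [hby_def, show SB ∩ Qd z₃ z₄ = ∅ from ?_, measure_empty]
          rcases not_and_or.mp hy with h | h <;> push_neg at h <;>
          · ext q
            simp only [mem_inter_iff, mem_empty_iff_false, iff_false, SB, Qd, mem_setOf_eq]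
            rintro ⟨⟨h1, h2, h3⟩, h4, h5⟩
            linarith
        rw [hby0]; exact zero_le (a := cy)
  calc ax * cy + m₁ + m₂ + dx * bY = (ax * cy + dx * bY) + (m₁ + m₂) := by ring
    _ ≤ (ax * bY + dx * cy) + (m₁ + m₂) := add_le_add key le_rfl
    _ = ax * bY + m₁ + m₂ + dx * cy := by ring
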